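/- Let h ∈ ℕ and δ ∈ (0,1) with h > 8·ln(4/δ), and let B ~ Binomial(h, 1/2). Then for every integer k with k > h/2 − √((h/2)·ln(4/δ)), one has Pr[B = k+1] ≤ (1 + √(32·ln(4/δ)/h)) · Pr[B = k]. -/

import Mathlib

open scoped ENNReal Classical

noncomputable section

namespace ShuffledDP

universe u v w

lemma half_le_one : (2⁻¹ : ℝ≥0∞) ≤ 1 := by
  simp [ENNReal.inv_le_one]

/-- Independent samples from a finite family of PMFs, collected (in order) as a list. -/
noncomputable def indep {α : Type u} : (n : ℕ) → (Fin n → PMF α) → PMF (List α)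
  | 0, _ => PMF.pure []
  | n + 1, f =>
      (f 0).bind fun y => (indep n fun i => f i.succ).bind fun ys => PMF.pure (y :: ys)

/-- `(ε, δ)`-differential privacy of a mechanism `M` with respect to a
neighboring relation `nbr` on inputs. -/
def DPFor {I : Type u} {Z : Type v} (nbr : I → I → Prop) (M : I → PMF Z) (ε δ : ℝ) : Prop :=
  ∀ x x', nbr x x' → ∀ T : Set Z,
    (M x).toOuterMeasure T ≤
      ENNReal.ofReal (Real.exp ε) * (M x').toOuterMeasure T + ENNReal.ofReal δ

/-- Two datasets are neighbors if they differ in at most one coordinate. -/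
def Neighbor {n : ℕ} {X : Type u} (x x' : Fin n → X) : Prop :=
  ∃ j, ∀ i, i ≠ j → x i = x' i

/-- The randomized-response local randomizer `R_{n,λ}`: output the input bit with
probability `1 - λ/n` and a uniformly random bit with probability `λ/n`. -/
noncomputable def rr (n : ℕ) (lam : ℝ) (x : Bool) : PMF Bool :=
  (PMF.bernoulli (min (ENNReal.ofReal (lam / n)) 1).toNNReal (by simpa using ENNReal.toNNReal_mono ENNReal.one_ne_top (min_le_right _ _))).bind fun b =>
    if b then PMF.bernoulli (2⁻¹ : ℝ≥0∞).toNNReal (by simpa using ENNReal.toNNReal_mono ENNReal.one_ne_top half_le_one) else PMF.pure x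

/-- Binomial distribution, valued in `ℕ`. -/
noncomputable def binom (p : ℝ≥0∞) (h : p ≤ 1) (m : ℕ) : PMF ℕ :=
  (PMF.binomial p.toNNReal (by simpa using ENNReal.toNNReal_mono ENNReal.one_ne_top h) m).map Fin.val

/-- Uniform distribution over the subsets of `Fin n` of size `s`. -/
noncomputable def uniformSubset (n s : ℕ) : PMF (Finset (Fin n)) :=
  if h : ((Finset.univ : Finset (Fin n)).powersetCard s).Nonempty then
    PMF.uniformOfFinset _ h
  else PMF.pure ∅

/-- `∑_{i ∉ H} x_i` for a boolean dataset `x`. -/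
def sumOutside {n : ℕ} (H : Finset (Fin n)) (x : Fin n → Bool) : ℕ :=
  ∑ i ∈ Hᶜ, (if x i then 1 else 0)

/-- The mechanism `C_H`: output `∑_{i ∉ H} x_i + B` with `B ~ Bin(|H|, 1/2)`. -/
noncomputable def CH (n : ℕ) (H : Finset (Fin n)) (x : Fin n → Bool) : PMF ℕ :=
  (binom 2⁻¹ half_le_one H.card).map fun B => sumOutside H x + B

/-- The mechanism `C_s`: sample `H` uniformly among size-`s` subsets, then run `C_H`. -/
noncomputable def Cs (n s : ℕ) (x : Fin n → Bool) : PMF ℕ :=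
  (uniformSubset n s).bind fun H => CH n H x

/-- The mechanism `C_λ`: sample `s ~ Bin(n, λ/n)`, then run `C_s`. -/
noncomputable def Cmech (n : ℕ) (lam : ℝ) (x : Fin n → Bool) : PMF ℕ :=
  (binom (min (ENNReal.ofReal (lam / n)) 1) (min_le_right _ _) n).bind fun s => Cs n s x

/-- The shuffled bit-sum mechanism `Π_{n,λ}`: the random multiset `{y_1, …, y_n}`
of the outputs `y_i ~ R_{n,λ}(x_i)`. -/
noncomputable def shuffleBit (n : ℕ) (lam : ℝ) (x : Fin n → Bool) : PMF (Multiset Bool) :=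
  (indep n fun i => rr n lam (x i)).map fun l => (l : Multiset Bool)

/-- The bit-sum protocol output `P_{n,λ}(x) = (n/(n-λ)) (∑ y_i - λ/2)`. -/
noncomputable def bitSumOutput (n : ℕ) (lam : ℝ) (x : Fin n → Bool) : PMF ℝ :=
  (indep n fun i => rr n lam (x i)).map fun l =>
    ((n : ℝ) / (n - lam)) * ((l.count true : ℝ) - lam / 2)

/-- The randomized-rounding encoder `E_r`. -/
noncomputable def encoder (r : ℕ) (x : ℝ) : PMF (Fin r → Bool) :=
  (PMF.bernoulli (min (ENNReal.ofReal (x * r - ⌈x * r⌉ + 1)) 1).toNNReal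
      (by simpa using ENNReal.toNNReal_mono ENNReal.one_ne_top (min_le_right _ _))).map
    fun b i => if ((i : ℕ) : ℤ) + 1 < ⌈x * r⌉ then true
      else if ((i : ℕ) : ℤ) + 1 = ⌈x * r⌉ then b else false

/-- The real-sum shuffled mechanism `Π^ℝ_{n,λ,r}`: the random multiset of all `n·r`
bits `y_{i,j} ~ R_{n,λ}(b_{i,j})` where `(b_{i,1},…,b_{i,r}) = E_r(x_i)`. -/
noncomputable def realShuffle (n : ℕ) (lam : ℝ) (r : ℕ) (X : Fin n → ℝ) :
    PMF (Multiset Bool) :=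
  (indep n fun i =>
      (encoder r (X i)).bind fun b =>
        (indep r fun j => rr n lam (b j)).map fun l => (l : Multiset Bool)).map
    fun ms => ms.sum

/-- The real-sum protocol output `z = (1/r)(n/(n-λ)) (∑_{i,j} y_{i,j} - λ r/2)`. -/
noncomputable def realOutput (n : ℕ) (lam : ℝ) (r : ℕ) (X : Fin n → ℝ) : PMF ℝ :=
  (realShuffle n lam r X).map fun m =>
    (1 / (r : ℝ)) * ((n : ℝ) / (n - lam)) * ((m.count true : ℝ) - lam * r / 2)

/-- The shuffled mechanism associated with a randomizer producing a multiset of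
messages: the union (multiset sum) of the `n` users' message multisets. -/
noncomputable def shuffM {𝒳 : Type u} {𝒴 : Type v} (n : ℕ) (R : 𝒳 → PMF (Multiset 𝒴))
    (x : Fin n → 𝒳) : PMF (Multiset 𝒴) :=
  (indep n fun i => R (x i)).map fun l => l.sum

/-- The multiset of the `m` messages output by an `m`-message randomizer. -/
noncomputable def vecR {𝒳 : Type u} {𝒴 : Type v} {m : ℕ} (R : 𝒳 → PMF (Fin m → 𝒴)) :
    𝒳 → PMF (Multiset 𝒴) :=
  fun a => (R a).map fun v => ((List.ofFn v : List 𝒴) : Multiset 𝒴)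

/-- The one-message shuffled mechanism `Π_R`: the random multiset `{R(x_1), …, R(x_n)}`. -/
noncomputable def shuffle1 {𝒳 : Type u} {𝒴 : Type v} (n : ℕ) (R : 𝒳 → PMF 𝒴)
    (x : Fin n → 𝒳) : PMF (Multiset 𝒴) :=
  (indep n fun i => R (x i)).map fun l => (l : Multiset 𝒴)

/-- `(ε, δ)`-differential privacy of a local randomizer (any two inputs are neighbors). -/
def RandDP {𝒳 : Type u} {𝒴 : Type v} (R : 𝒳 → PMF 𝒴) (ε δ : ℝ) : Prop :=
  ∀ x x' : 𝒳, ∀ T : Set 𝒴,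
    (R x).toOuterMeasure T ≤
      ENNReal.ofReal (Real.exp ε) * (R x').toOuterMeasure T + ENNReal.ofReal δ

/-- The output of the local protocol `(R, A)`. -/
noncomputable def localOut {𝒳 : Type u} {𝒴 : Type v} {𝒵 : Type w} (n : ℕ)
    (R : 𝒳 → PMF 𝒴) (A : List 𝒴 → 𝒵) (X : Fin n → 𝒳) : PMF 𝒵 :=
  (indep n fun i => R (X i)).map A

/-- `(a, b)`-accuracy of a protocol `P` for a function `f` w.r.t. a distance `d`. -/
def AccFor {I : Type u} {𝒵 : Type w} (P : I → PMF 𝒵) (f : I → 𝒵) (d : 𝒵 → 𝒵 → ℝ)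
    (a b : ℝ) : Prop :=
  ∀ X, ENNReal.ofReal (1 - b) ≤ (P X).toOuterMeasure {z | d z (f X) ≤ a}


lemma binom_half_apply (h k : ℕ) :
    binom 2⁻¹ half_le_one h k
      = if k ≤ h then (2⁻¹ : ℝ≥0∞) ^ h * h.choose k else 0 := by
  rw [binom, PMF.map_apply, tsum_fintype]
  by_cases hkh : k ≤ h
  · rw [if_pos hkh]
    rw [Finset.sum_eq_single (⟨k, Nat.lt_succ_of_le hkh⟩ : Fin (h + 1))]
    · rw [if_pos rfl]
      erw [PMF.binomial_apply]
      simp only [Fin.val_last]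
      have e : (2⁻¹ : ℝ≥0∞).toNNReal = 2⁻¹ := by simp [ENNReal.toNNReal_ofNat]
      rw [e]
      push_cast
      rw [ENNReal.one_sub_inv_two]
      rw [← pow_add, Nat.add_sub_cancel' hkh]
    · intro i _ hi
      rw [if_neg]
      intro hki
      exact hi (by ext; simp [← hki])
    · intro hmem; exact absurd (Finset.mem_univ _) hmem
  · rw [if_neg hkh]
    apply Finset.sum_eq_zero
    intro i _
    rw [if_neg]
    intro hki
    exact hkh (hki ▸ Nat.le_of_lt_succ i.isLt)

/-- for `B ~ Bin(h, 1/2)` with `h > 8 ln(4/δ)` and any integer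
`k > h/2 - √((h/2) ln(4/δ))`,
`Pr[B = k+1] ≤ (1 + √(32 ln(4/δ)/h)) Pr[B = k]`. -/
theorem stmt2 (h : ℕ) (del : ℝ) (hdel : del ∈ Set.Ioo (0 : ℝ) 1)
    (hh : 8 * Real.log (4 / del) < (h : ℝ)) (k : ℕ)
    (hk : (h : ℝ) / 2 - Real.sqrt ((h / 2) * Real.log (4 / del)) < (k : ℝ)) :
    binom 2⁻¹ half_le_one h (k + 1) ≤
      ENNReal.ofReal (1 + Real.sqrt (32 * Real.log (4 / del) / h)) *
        binom 2⁻¹ half_le_one h k := by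
  obtain ⟨hd0, hd1⟩ := hdel
  set L := Real.log (4 / del) with hLdef
  have hL : 0 < L := Real.log_pos (by rw [lt_div_iff₀ hd0]; linarith)
  have hh0 : (0 : ℝ) < h := by nlinarith
  set s := Real.sqrt ((h / 2) * L) with hsdef
  set t := Real.sqrt (32 * L / h) with htdef
  have hs0 : 0 ≤ s := Real.sqrt_nonneg _
  have ht0 : 0 ≤ t := Real.sqrt_nonneg _
  have hs2 : s ^ 2 = (h : ℝ) / 2 * L := Real.sq_sqrt (by positivity)
  have ht2 : t ^ 2 = 32 * L / h := Real.sq_sqrt (by positivity)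
  -- key multiplicative identities
  have hts : t * s = 4 * L := by
    rw [htdef, hsdef, ← Real.sqrt_mul (by positivity)]
    rw [show 32 * L / ↑h * (↑h / 2 * L) = (4 * L) ^ 2 by field_simp; ring]
    exact Real.sqrt_sq (by positivity)
  have hth : t * (h : ℝ) = 8 * s := by
    have h1 : t * (h : ℝ) = Real.sqrt (32 * L * h) := by
      rw [htdef, ← Real.sqrt_sq hh0.le, ← Real.sqrt_mul (by positivity)]
      congr 1
      field_simp
      ring_nf; rw [Real.sq_sqrt (sq_nonneg _)]
    have h2 : 8 * s = Real.sqrt (32 * L * h) := by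
      rw [hsdef, show (8 : ℝ) = Real.sqrt 64 from by
          rw [show (64 : ℝ) = 8 ^ 2 by norm_num, Real.sqrt_sq (by norm_num)],
        ← Real.sqrt_mul (by norm_num)]
      congr 1
      ring
    rw [h1, h2]
  have h2s : 4 * L < 2 * s := by nlinarith
  -- the main real inequality
  have hreal : (h : ℝ) - k ≤ (1 + t) * ((k : ℝ) + 1) := by
    have hk' : (h : ℝ) / 2 - s ≤ (k : ℝ) := hk.le
    have hmul : t * ((h : ℝ) / 2 - s) ≤ t * k := by
      exact mul_le_mul_of_nonneg_left hk' ht0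
    nlinarith
  by_cases hkh : k + 1 ≤ h
  · have hkh' : k ≤ h := by omega
    rw [binom_half_apply, binom_half_apply, if_pos hkh, if_pos hkh']
    rw [mul_comm (ENNReal.ofReal _), mul_assoc]
    refine mul_le_mul_right ?_ _
    -- cast the choose inequality to ℝ≥0∞
    have hchoose : (h.choose (k + 1) : ℝ) ≤ (1 + t) * h.choose k := by
      have hid : (h.choose (k + 1) : ℝ) * ((k : ℝ) + 1)
          = (h.choose k : ℝ) * ((h : ℝ) - k) := by
        have := Nat.choose_succ_right_eq h k
        have hc : ((h.choose (k + 1) : ℝ)) * ((k : ℝ) + 1)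
            = (h.choose k : ℝ) * (((h - k : ℕ) : ℝ)) := by exact_mod_cast this
        rw [Nat.cast_sub hkh'] at hc
        linarith
      have hc0 : (0 : ℝ) ≤ (h.choose k : ℝ) := Nat.cast_nonneg _
      nlinarith
    calc (h.choose (k + 1) : ℝ≥0∞)
        = ENNReal.ofReal (h.choose (k + 1) : ℝ) := by
          rw [ENNReal.ofReal_natCast]
      _ ≤ ENNReal.ofReal ((1 + t) * h.choose k) := ENNReal.ofReal_le_ofReal hchoose
      _ = (h.choose k : ℝ≥0∞) * ENNReal.ofReal (1 + t) := by
          rw [ENNReal.ofReal_mul (by positivity), ENNReal.ofReal_natCast, mul_comm]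
  · rw [binom_half_apply, if_neg hkh]
    exact zero_le

end ShuffledDP
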